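/- The set of tight cycles of a connected undirected graph G with non-negative edge weights spans the cycle space of G; in particular, the matrix whose columns are the incidence vectors of the tight cycles of G has rank ν, the dimension of the cycle space. -/

import Mathlib

open scoped Classical

noncomputable section

namespace PaperMCB

variable {V : Type*} [Fintype V] [DecidableEq V]

/-- The boundary map sending a `ℤ₂`-chain of edges to the `ℤ₂`-chain of vertices
recording the parity of the degree of each vertex in the chain. -/
def boundaryMap (G : SimpleGraph V) :
    (G.edgeSet → ZMod 2) →ₗ[ZMod 2] (V → ZMod 2) :=
  Matrix.mulVecLin (Matrix.of fun (v : V) (e : G.edgeSet) =>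
    if v ∈ (e : Sym2 V) then (1 : ZMod 2) else 0)

/-- The cycle space of a graph over `ℤ₂`: chains of edges in which every vertex
has even degree. -/
def cycleSpace (G : SimpleGraph V) : Submodule (ZMod 2) (G.edgeSet → ZMod 2) :=
  LinearMap.ker (boundaryMap G)

/-- The weight of a cycle: the sum of the weights of its edges. -/
def cycleWeight (G : SimpleGraph V) (w : Sym2 V → ℝ) (c : G.edgeSet → ZMod 2) : ℝ :=
  ∑ e : G.edgeSet, if c e = 1 then w (e : Sym2 V) else 0

/-- The weight of a set of cycles: the sum of the weights of its elements. -/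
def setWeight (G : SimpleGraph V) (w : Sym2 V → ℝ) (B : Finset (G.edgeSet → ZMod 2)) : ℝ :=
  ∑ c ∈ B, cycleWeight G w c

/-- A set of cycles is a cycle basis if it is linearly independent and spans the
cycle space. -/
def IsCycleBasis (G : SimpleGraph V) (B : Finset (G.edgeSet → ZMod 2)) : Prop :=
  LinearIndependent (ZMod 2)
    (fun c : (B : Set (G.edgeSet → ZMod 2)) => (c : G.edgeSet → ZMod 2)) ∧
  Submodule.span (ZMod 2) (B : Set (G.edgeSet → ZMod 2)) = cycleSpace G

/-- A minimum cycle basis is a cycle basis of minimum total weight. -/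
def IsMinCycleBasis (G : SimpleGraph V) (w : Sym2 V → ℝ)
    (B : Finset (G.edgeSet → ZMod 2)) : Prop :=
  IsCycleBasis G B ∧
  ∀ B' : Finset (G.edgeSet → ZMod 2), IsCycleBasis G B' →
    setWeight G w B ≤ setWeight G w B'

/-- The `ℤ₂` incidence vector of (the edge set of) a walk. -/
def walkChain (G : SimpleGraph V) {u v : V} (W : G.Walk u v) : G.edgeSet → ZMod 2 :=
  fun e => if (e : Sym2 V) ∈ W.edges then 1 else 0

/-- The weight of a walk: the sum of the weights of its edges. -/
def walkWeight (w : Sym2 V → ℝ) {G : SimpleGraph V} {u v : V} (W : G.Walk u v) : ℝ :=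
  (W.edges.map w).sum

/-- An elementary cycle: the incidence vector of the edge set of a closed walk that is
a graph cycle (connected, all degrees two). -/
def IsElementaryCycle (G : SimpleGraph V) (c : G.edgeSet → ZMod 2) : Prop :=
  ∃ (u : V) (W : G.Walk u u), W.IsCycle ∧ walkChain G W = c

/-- A tight (isometric) cycle: an elementary cycle containing a shortest path between
every pair of its vertices. -/
def IsTight (G : SimpleGraph V) (w : Sym2 V → ℝ) (c : G.edgeSet → ZMod 2) : Prop :=
  ∃ (u : V) (W : G.Walk u u), W.IsCycle ∧ walkChain G W = c ∧
    ∀ x y : V, x ∈ W.support → y ∈ W.support →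
      ∃ P : G.Walk x y, (∀ e ∈ P.edges, e ∈ W.edges) ∧
        ∀ Q : G.Walk x y, walkWeight w P ≤ walkWeight w Q


-- auxiliary lemmas

lemma zmod2_01 : ∀ z : ZMod 2, z = 0 ∨ z = 1 := by decide

lemma zmod2_aa : ∀ a b : ZMod 2, (a + b) + (a + b) = 0 := by decide

lemma zmod2_ab : ∀ a b : ZMod 2, (a + b) + (b + a) = 0 := by decide

lemma zmod2_cancel : ∀ a b p : ZMod 2, (a + p) + (b + p) = a + b := by decide

lemma zmod2_bab : ∀ a b : ZMod 2, b + (a + b) = a := by decide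

variable {G : SimpleGraph V}

lemma boundaryMap_apply (c : G.edgeSet → ZMod 2) (v : V) :
    boundaryMap G c v
      = ∑ e : G.edgeSet, (if v ∈ (e : Sym2 V) then (1 : ZMod 2) else 0) * c e := by
  simp [boundaryMap, Matrix.mulVecLin_apply, Matrix.mulVec, dotProduct]

lemma boundary_trail {a b : V} (T : G.Walk a b) (hT : T.IsTrail) :
    boundaryMap G (walkChain G T)
      = fun v => (if v = a then (1 : ZMod 2) else 0) + (if v = b then 1 else 0) := by
  induction T with
  | nil =>
    funext v
    rw [boundaryMap_apply]
    rw [Finset.sum_eq_zero (fun e _ => by simp [walkChain])]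
    split_ifs <;> decide
  | @cons u x b h q ih =>
    have hT' : q.IsTrail ∧ s(u, x) ∉ q.edges := by
      rwa [SimpleGraph.Walk.isTrail_cons] at hT
    have hsplit : walkChain G (SimpleGraph.Walk.cons h q)
        = (fun e : G.edgeSet => if (e : Sym2 V) = s(u, x) then (1 : ZMod 2) else 0) + walkChain G q := by
      funext e
      simp only [walkChain, SimpleGraph.Walk.edges_cons, List.mem_cons, Pi.add_apply]
      by_cases h1 : (e : Sym2 V) = s(u, x)
      · simp [h1, hT'.2]
      · by_cases h2 : (e : Sym2 V) ∈ q.edges <;> simp [h1, h2]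
    have hmem : s(u, x) ∈ G.edgeSet := h
    have hb1 : boundaryMap G (fun e : G.edgeSet => if (e : Sym2 V) = s(u, x) then (1 : ZMod 2) else 0)
        = fun v => (if v = u then (1 : ZMod 2) else 0) + (if v = x then 1 else 0) := by
      funext v
      rw [boundaryMap_apply]
      rw [Finset.sum_eq_single (⟨s(u, x), hmem⟩ : G.edgeSet)]
      · have hne : u ≠ x := G.ne_of_adj h
        show (if v ∈ s(u, x) then (1 : ZMod 2) else 0)
            * (if s(u, x) = s(u, x) then (1 : ZMod 2) else 0) = _
        rw [if_pos rfl, mul_one]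
        by_cases h1 : v = u
        · subst h1; simp [Sym2.mem_iff, hne]
        · by_cases h2 : v = x
          · subst h2; simp [Sym2.mem_iff, h1]
          · simp [Sym2.mem_iff, h1, h2]
      · intro e _ hne
        have : (e : Sym2 V) ≠ s(u, x) := fun hh => hne (Subtype.ext hh)
        simp [this]
      · intro hx; exact absurd (Finset.mem_univ _) hx
    rw [hsplit, map_add, hb1, ih hT'.1]
    funext v
    simp only [Pi.add_apply]
    beta_reduce
    split_ifs <;> decide

lemma walkChain_mem_cycleSpace {u : V} {W : G.Walk u u} (hW : W.IsTrail) :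
    walkChain G W ∈ cycleSpace G := by
  rw [cycleSpace, LinearMap.mem_ker, boundary_trail W hW]
  funext v
  simp only [Pi.zero_apply]
  beta_reduce
  split_ifs <;> decide

-- weight lemmas

lemma walkWeight_nonneg {w : Sym2 V → ℝ} (hw : ∀ e, 0 ≤ w e) {x y : V} (p : G.Walk x y) :
    0 ≤ walkWeight w p :=
  List.sum_nonneg (by
    intro a ha
    obtain ⟨e, _, rfl⟩ := List.mem_map.mp ha
    exact hw e)

lemma toFinset_sum_le_map_sum {w : Sym2 V → ℝ} (hw : ∀ e, 0 ≤ w e) :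
    ∀ l : List (Sym2 V), (∑ s ∈ l.toFinset, w s) ≤ (l.map w).sum := by
  intro l
  induction l with
  | nil => simp
  | cons a t ih =>
    rw [List.toFinset_cons, List.map_cons, List.sum_cons]
    by_cases h : a ∈ t.toFinset
    · rw [Finset.insert_eq_self.mpr h]
      linarith [hw a]
    · rw [Finset.sum_insert h]
      linarith

lemma nodup_sub_weight_le {w : Sym2 V → ℝ} (hw : ∀ e, 0 ≤ w e) {l : List (Sym2 V)}
    (hl : l.Nodup) {x y : V} (Q : G.Walk x y) (hsub : ∀ s ∈ l, s ∈ Q.edges) :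
    (l.map w).sum ≤ walkWeight w Q := by
  rw [← List.sum_toFinset w hl]
  refine le_trans ?_ (toFinset_sum_le_map_sum hw Q.edges)
  apply Finset.sum_le_sum_of_subset_of_nonneg
  · intro s hs
    exact List.mem_toFinset.mpr (hsub s (List.mem_toFinset.mp hs))
  · intro s _ _
    exact hw s

lemma walkWeight_bypass_le {w : Sym2 V → ℝ} (hw : ∀ e, 0 ≤ w e) {x y : V} (Q : G.Walk x y) :
    walkWeight w Q.bypass ≤ walkWeight w Q :=
  nodup_sub_weight_le hw Q.bypass_isPath.isTrail.edges_nodup Q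
    (fun s hs => Q.edges_bypass_subset hs)

lemma exists_shortest_path (hG : G.Connected) (w : Sym2 V → ℝ) (hw : ∀ e, 0 ≤ w e) (x y : V) :
    ∃ P : G.Walk x y, P.IsPath ∧ ∀ Q : G.Walk x y, walkWeight w P ≤ walkWeight w Q := by
  have hr : G.Reachable x y := hG.preconnected x y
  have hne : (Finset.univ : Finset (G.Path x y)).Nonempty :=
    ⟨hr.some.toPath, Finset.mem_univ _⟩
  obtain ⟨p, -, hmin⟩ :=
    Finset.exists_min_image (Finset.univ : Finset (G.Path x y)) (fun p => walkWeight w p.1) hne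
  refine ⟨p.1, p.2, fun Q => ?_⟩
  exact le_trans (hmin ⟨Q.bypass, Q.bypass_isPath⟩ (Finset.mem_univ _)) (walkWeight_bypass_le hw Q)

-- cycleWeight lemmas

lemma cycleWeight_nonneg {w : Sym2 V → ℝ} (hw : ∀ e, 0 ≤ w e) (c : G.edgeSet → ZMod 2) :
    0 ≤ cycleWeight G w c :=
  Finset.sum_nonneg (by
    intro e _
    split_ifs
    · exact hw _
    · exact le_refl 0)

lemma cycleWeight_mono {w : Sym2 V → ℝ} (hw : ∀ e, 0 ≤ w e) {c d : G.edgeSet → ZMod 2}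
    (h : ∀ e, c e = 1 → d e = 1) : cycleWeight G w c ≤ cycleWeight G w d := by
  apply Finset.sum_le_sum
  intro e _
  rcases zmod2_01 (c e) with h0 | h1
  · rw [if_neg (by rw [h0]; decide)]
    split_ifs
    · exact hw _
    · exact le_refl 0
  · rw [if_pos h1, if_pos (h e h1)]

lemma cycleWeight_add_le {w : Sym2 V → ℝ} (hw : ∀ e, 0 ≤ w e) (c d : G.edgeSet → ZMod 2) :
    cycleWeight G w (c + d) ≤ cycleWeight G w c + cycleWeight G w d := by
  unfold cycleWeight
  rw [← Finset.sum_add_distrib]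
  apply Finset.sum_le_sum
  intro e _
  have hwe := hw (e : Sym2 V)
  have h11 : (1 : ZMod 2) + 1 = 0 := by decide
  rcases zmod2_01 (c e) with h | h <;> rcases zmod2_01 (d e) with h' | h' <;>
    simp [Pi.add_apply, h, h', h11] <;> linarith

lemma cycleWeight_walkChain {w : Sym2 V → ℝ} {x y : V} (W : G.Walk x y) :
    cycleWeight G w (walkChain G W) = ∑ s ∈ W.edges.toFinset, w s := by
  unfold cycleWeight
  have hcond : ∀ e : G.edgeSet, (walkChain G W e = 1) ↔ ((e : Sym2 V) ∈ W.edges) := by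
    intro e
    by_cases h : (e : Sym2 V) ∈ W.edges <;> simp [walkChain, h]
  rw [Finset.sum_congr rfl (fun e _ => by rw [if_congr (hcond e) rfl rfl])]
  rw [← Finset.sum_filter]
  apply Finset.sum_bij (fun (e : G.edgeSet) _ => (e : Sym2 V))
  · intro e he
    exact List.mem_toFinset.mpr ((Finset.mem_filter.mp he).2)
  · intro e₁ h₁ e₂ h₂ hh
    exact Subtype.ext hh
  · intro s hs
    have hs' := List.mem_toFinset.mp hs
    exact ⟨⟨s, W.edges_subset_edgeSet hs'⟩, Finset.mem_filter.mpr ⟨Finset.mem_univ _, hs'⟩, rfl⟩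
  · intro e _
    rfl

lemma cycleWeight_walkChain_trail {w : Sym2 V → ℝ} {x y : V} {W : G.Walk x y}
    (hW : W.IsTrail) : cycleWeight G w (walkChain G W) = walkWeight w W := by
  rw [cycleWeight_walkChain]
  exact List.sum_toFinset w hW.edges_nodup

-- edges at the start of a path

lemma path_edges_start_unique {x y : V} {p : G.Walk x y} (hp : p.IsPath) :
    ∀ e ∈ p.edges, x ∈ e → ∀ f ∈ p.edges, x ∈ f → e = f := by
  cases p with
  | nil => simp
  | @cons u z y h q =>
    intro e he hxe f hf hxf
    have hq : x ∉ q.support := (SimpleGraph.Walk.cons_isPath_iff h q).mp hp |>.2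
    have key : ∀ g ∈ (SimpleGraph.Walk.cons h q).edges, x ∈ g → g = s(x, z) := by
      intro g hg hxg
      rw [SimpleGraph.Walk.edges_cons, List.mem_cons] at hg
      rcases hg with rfl | hg
      · rfl
      · exfalso
        induction g with
        | _ a b =>
          rcases Sym2.mem_iff.mp hxg with rfl | rfl
          · exact hq (q.fst_mem_support_of_mem_edges hg)
          · exact hq (q.snd_mem_support_of_mem_edges hg)
    rw [key e he hxe, key f hf hxf]

lemma path_edges_end_unique {x y : V} {p : G.Walk x y} (hp : p.IsPath) :
    ∀ e ∈ p.edges, y ∈ e → ∀ f ∈ p.edges, y ∈ f → e = f := by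
  intro e he hye f hf hyf
  have hrev : ∀ g, g ∈ p.edges → g ∈ p.reverse.edges := by
    intro g hg
    rw [SimpleGraph.Walk.edges_reverse, List.mem_reverse]
    exact hg
  exact path_edges_start_unique hp.reverse e (hrev e he) hye f (hrev f hf) hyf

-- extracting a cycle from a graph with all degrees even

lemma exists_cycle_of_even (H : SimpleGraph V) (hne : H.edgeSet.Nonempty)
    (heven : ∀ v : V, Even (H.incidenceFinset v).card) :
    ∃ (u : V) (W : H.Walk u u), W.IsCycle := by
  obtain ⟨e₀, he₀⟩ := hne
  induction e₀ with
  | _ a b =>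
    have hadj : H.Adj a b := (SimpleGraph.mem_edgeSet H).mp he₀
    -- pick a maximum-length path
    have hone : ((SimpleGraph.Walk.cons hadj SimpleGraph.Walk.nil) : H.Walk a b).IsPath := by
      refine SimpleGraph.Walk.IsPath.nil.cons ?_
      simp [hadj.ne]
    obtain ⟨t, -, hmax⟩ := Finset.exists_max_image
      (Finset.univ : Finset (Σ x : V, Σ y : V, H.Path x y)) (fun t => t.2.2.1.length)
      ⟨⟨a, b, ⟨_, hone⟩⟩, Finset.mem_univ _⟩
    obtain ⟨x, y, p, hp⟩ : ∃ (x y : V) (p : H.Walk x y), p.IsPath ∧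
        (∀ (x' y' : V) (q : H.Walk x' y'), q.IsPath → q.length ≤ p.length) ∧ 1 ≤ p.length := by
      refine ⟨t.1, t.2.1, t.2.2.1, t.2.2.2, fun x' y' q hq => ?_, ?_⟩
      · exact hmax ⟨x', y', ⟨q, hq⟩⟩ (Finset.mem_univ _)
      · exact le_trans (by simp) (hmax ⟨a, b, ⟨_, hone⟩⟩ (Finset.mem_univ _))
    obtain ⟨hppath, hplen, hp1⟩ := hp
    -- the last edge of p
    have hnnil : ¬ p.reverse.Nil := by
      rw [SimpleGraph.Walk.nil_iff_length_eq, SimpleGraph.Walk.length_reverse]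
      omega
    obtain ⟨z₀, hadj₀, q₀, hq₀⟩ := SimpleGraph.Walk.not_nil_iff.mp hnnil
    have hlast : s(y, z₀) ∈ p.edges := by
      have : s(y, z₀) ∈ p.reverse.edges := by
        rw [hq₀, SimpleGraph.Walk.edges_cons]
        exact List.mem_cons_self
      rwa [SimpleGraph.Walk.edges_reverse, List.mem_reverse] at this
    -- y has an incident edge not on p
    have hycard : 2 ≤ (H.incidenceFinset y).card := by
      have hmem : s(y, z₀) ∈ H.incidenceFinset y := by
        rw [SimpleGraph.mem_incidenceFinset]
        exact ⟨p.edges_subset_edgeSet hlast, Sym2.mem_mk_left _ _⟩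
      rcases heven y with ⟨k, hk⟩
      have : 0 < (H.incidenceFinset y).card := Finset.card_pos.mpr ⟨_, hmem⟩
      omega
    obtain ⟨f, hfI, hfp⟩ : ∃ f ∈ H.incidenceFinset y, f ∉ p.edges := by
      by_contra hcon
      push_neg at hcon
      have hle : (H.incidenceFinset y).card ≤ 1 := by
        apply Finset.card_le_one.mpr
        intro e he g hg
        rw [SimpleGraph.mem_incidenceFinset] at he hg
        have he' : e ∈ H.edgeSet ∧ y ∈ e := he
        have hg' : g ∈ H.edgeSet ∧ y ∈ g := hg
        exact path_edges_end_unique hppath e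
          (hcon e ((H.mem_incidenceFinset y e).mpr he)) he'.2 g
          (hcon g ((H.mem_incidenceFinset y g).mpr hg)) hg'.2
      omega
    rw [SimpleGraph.mem_incidenceFinset] at hfI
    have hfI' : f ∈ H.edgeSet ∧ y ∈ f := hfI
    obtain ⟨z, rfl⟩ := Sym2.mem_iff_exists.mp hfI'.2
    have hadjz : H.Adj y z := (SimpleGraph.mem_edgeSet H).mp hfI'.1
    by_cases hz : z ∈ p.support
    · -- construct a cycle
      have hd : (p.dropUntil z hz).IsPath := hppath.dropUntil hz
      have hnd : s(y, z) ∉ (p.dropUntil z hz).edges :=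
        fun hh => hfp (p.edges_dropUntil_subset hz hh)
      refine ⟨y, SimpleGraph.Walk.cons hadjz (p.dropUntil z hz), ?_⟩
      exact (SimpleGraph.Walk.cons_isCycle_iff _ hadjz).mpr ⟨hd, hnd⟩
    · -- extend p, contradicting maximality
      exfalso
      have hext : (p.concat hadjz).IsPath := by
        rw [← SimpleGraph.Walk.isPath_reverse_iff, SimpleGraph.Walk.reverse_concat]
        refine hppath.reverse.cons ?_
        rwa [SimpleGraph.Walk.support_reverse, List.mem_reverse]
      have := hplen _ _ _ hext
      rw [SimpleGraph.Walk.length_concat] at this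
      omega

-- extracting an elementary cycle inside the support of a nonzero cycle-space element

lemma exists_elementary {c : G.edgeSet → ZMod 2} (hc : c ∈ cycleSpace G) (hc0 : c ≠ 0) :
    ∃ (u : V) (W : G.Walk u u), W.IsCycle ∧ (∀ e, walkChain G W e = 1 → c e = 1) ∧
      walkChain G W ≠ 0 := by
  set S : Set (Sym2 V) := {s | ∃ h : s ∈ G.edgeSet, c ⟨s, h⟩ = 1} with hS
  have hSG : S ⊆ G.edgeSet := fun s hs => hs.1
  set H : SimpleGraph V := SimpleGraph.fromEdgeSet S with hH
  have hHG : H ≤ G := by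
    rw [hH]
    calc SimpleGraph.fromEdgeSet S ≤ SimpleGraph.fromEdgeSet G.edgeSet :=
          SimpleGraph.fromEdgeSet_mono hSG
      _ = G := G.fromEdgeSet_edgeSet
  have hHe : H.edgeSet = S := by
    rw [hH, SimpleGraph.edgeSet_fromEdgeSet]
    ext s
    constructor
    · exact fun h => h.1
    · intro h
      exact ⟨h, G.not_isDiag_of_mem_edgeSet (hSG h)⟩
  -- S is nonempty
  have hne : H.edgeSet.Nonempty := by
    rw [hHe]
    obtain ⟨e, he⟩ := Function.ne_iff.mp hc0
    rcases zmod2_01 (c e) with h0 | h1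
    · exact absurd h0 he
    · exact ⟨(e : Sym2 V), e.2, by rwa [Subtype.coe_eta]⟩
  -- even degrees
  have heven : ∀ v : V, Even (H.incidenceFinset v).card := by
    intro v
    have hb : boundaryMap G c v = 0 := by
      have := (LinearMap.mem_ker).mp hc
      rw [this]
      rfl
    rw [boundaryMap_apply] at hb
    have hconv : ∀ e : G.edgeSet,
        (if v ∈ (e : Sym2 V) then (1 : ZMod 2) else 0) * c e
          = if (v ∈ (e : Sym2 V) ∧ c e = 1) then 1 else 0 := by
      intro e
      rcases zmod2_01 (c e) with h | h <;> rw [h] <;> by_cases hv : v ∈ (e : Sym2 V) <;>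
        simp [hv]
    rw [Finset.sum_congr rfl (fun e _ => hconv e), Finset.sum_boole] at hb
    have hdvd : (2 : ℕ) ∣ (Finset.univ.filter
        (fun e : G.edgeSet => v ∈ (e : Sym2 V) ∧ c e = 1)).card :=
      (ZMod.natCast_eq_zero_iff _ 2).mp hb
    have hcard : (Finset.univ.filter
        (fun e : G.edgeSet => v ∈ (e : Sym2 V) ∧ c e = 1)).card
        = (H.incidenceFinset v).card := by
      apply Finset.card_bij (fun (e : G.edgeSet) _ => (e : Sym2 V))
      · intro e he
        have hee := (Finset.mem_filter.mp he).2
        rw [SimpleGraph.mem_incidenceFinset]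
        refine ⟨?_, hee.1⟩
        rw [hHe]
        exact ⟨e.2, by rw [Subtype.coe_eta]; exact hee.2⟩
      · intro e₁ h₁ e₂ h₂ hh
        exact Subtype.ext hh
      · intro s hs
        rw [SimpleGraph.mem_incidenceFinset] at hs
        have hs' : s ∈ H.edgeSet ∧ v ∈ s := hs
        have hsS : s ∈ S := by rw [← hHe]; exact hs'.1
        obtain ⟨hg, h1⟩ := hsS
        exact ⟨⟨s, hg⟩, Finset.mem_filter.mpr ⟨Finset.mem_univ _, hs'.2, h1⟩, rfl⟩
    rw [← hcard]
    exact even_iff_two_dvd.mpr hdvd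
  obtain ⟨u, WH, hWH⟩ := exists_cycle_of_even H hne (by convert heven)
  have hsub : ∀ e ∈ WH.edges, e ∈ G.edgeSet := by
    intro e he
    exact SimpleGraph.edgeSet_mono hHG (WH.edges_subset_edgeSet he)
  refine ⟨u, WH.transfer G hsub, hWH.transfer hsub, ?_, ?_⟩
  · intro e he
    have hmem : (e : Sym2 V) ∈ WH.edges := by
      by_contra hcon
      rw [walkChain, SimpleGraph.Walk.edges_transfer, if_neg hcon] at he
      exact absurd he (by decide)
    have hSme : (e : Sym2 V) ∈ S := by
      rw [← hHe]
      exact WH.edges_subset_edgeSet hmem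
    obtain ⟨h', hc1⟩ := hSme
    rwa [Subtype.coe_eta] at hc1
  · have hnnil : ¬ WH.Nil := by
      intro hnil
      exact hWH.ne_nil (SimpleGraph.Walk.nil_iff_eq_nil.mp hnil)
    obtain ⟨z, hadj, q, hq⟩ := SimpleGraph.Walk.not_nil_iff.mp hnnil
    have hmem : s(u, z) ∈ WH.edges := by
      rw [hq, SimpleGraph.Walk.edges_cons]
      exact List.mem_cons_self
    intro hzero
    have : walkChain G (WH.transfer G hsub) ⟨s(u, z), hsub _ hmem⟩ = 0 := by rw [hzero]; rfl
    rw [walkChain, SimpleGraph.Walk.edges_transfer, if_pos hmem] at this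
    exact absurd this (by decide)

lemma walkWeight_reverse (w : Sym2 V → ℝ) {x y : V} (p : G.Walk x y) :
    walkWeight w p.reverse = walkWeight w p := by
  unfold walkWeight
  rw [SimpleGraph.Walk.edges_reverse, List.map_reverse, List.sum_reverse]

lemma span_tight_eq (hG : G.Connected) (w : Sym2 V → ℝ) (hw : ∀ e, 0 ≤ w e) :
    Submodule.span (ZMod 2) {c : G.edgeSet → ZMod 2 | IsTight G w c} = cycleSpace G := by
  apply le_antisymm
  · rw [Submodule.span_le]
    rintro c ⟨u, W, hW, rfl, -⟩
    exact walkChain_mem_cycleSpace hW.isCircuit.isTrail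
  · intro c hc
    by_contra hcS
    set Sp := Submodule.span (ZMod 2) {c : G.edgeSet → ZMod 2 | IsTight G w c} with hSp
    set μ : (G.edgeSet → ZMod 2) → ℝ ×ₗ ℕ :=
      fun d => toLex (cycleWeight G w d, (Finset.univ.filter (fun e => d e = 1)).card) with hμ
    set T : Finset (G.edgeSet → ZMod 2) :=
      Finset.univ.filter (fun d => d ∈ cycleSpace G ∧ d ∉ Sp) with hT
    have hTne : T.Nonempty := ⟨c, by simp [hT, hc, hcS]⟩
    obtain ⟨c₀, hc₀T, hmin⟩ := Finset.exists_min_image T μ hTne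
    have hc₀ : c₀ ∈ cycleSpace G := ((Finset.mem_filter.mp hc₀T).2).1
    have hc₀S : c₀ ∉ Sp := ((Finset.mem_filter.mp hc₀T).2).2
    have hsmall : ∀ d, d ∈ cycleSpace G → μ d < μ c₀ → d ∈ Sp := by
      intro d hd hlt
      by_contra hdS
      exact absurd (hmin d (by simp [hT, hd, hdS])) (not_le.mpr hlt)
    have hc₀0 : c₀ ≠ 0 := by
      intro h
      rw [h] at hc₀S
      exact hc₀S (Submodule.zero_mem _)
    obtain ⟨u, W, hW, hsupp, hWne⟩ := exists_elementary hc₀ hc₀0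
    have hWcs : walkChain G W ∈ cycleSpace G := walkChain_mem_cycleSpace hW.isCircuit.isTrail
    -- a useful extensionality fact
    have hext : ∀ d d' : G.edgeSet → ZMod 2, (∀ e, d e = 1 → d' e = 1) → d ≠ d' →
        (Finset.univ.filter (fun e => d e = 1)).card
          < (Finset.univ.filter (fun e => d' e = 1)).card := by
      intro d d' hsub hne
      apply Finset.card_lt_card
      rw [Finset.ssubset_iff_subset_ne]
      constructor
      · intro e he
        exact Finset.mem_filter.mpr ⟨Finset.mem_univ _, hsub e (Finset.mem_filter.mp he).2⟩
      · intro heq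
        apply hne
        funext e
        have : (d e = 1) ↔ (d' e = 1) := by
          have hiff := Finset.ext_iff.mp heq e
          simpa only [Finset.mem_filter, Finset.mem_univ, true_and] using hiff
        rcases zmod2_01 (d e) with h0 | h1
        · rcases zmod2_01 (d' e) with h0' | h1'
          · rw [h0, h0']
          · exact absurd (this.mpr h1') (by rw [h0]; decide)
        · rw [h1, this.mp h1]
    by_cases hcase : walkChain G W = c₀
    · -- c₀ is elementary; it cannot be tight
      have hnt : ¬ IsTight G w c₀ := fun ht => hc₀S (Submodule.subset_span ht)
      have hncond : ¬ (∀ x y : V, x ∈ W.support → y ∈ W.support →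
          ∃ P : G.Walk x y, (∀ e ∈ P.edges, e ∈ W.edges) ∧
            ∀ Q : G.Walk x y, walkWeight w P ≤ walkWeight w Q) :=
        fun hcond => hnt ⟨u, W, hW, hcase, hcond⟩
      push_neg at hncond
      obtain ⟨x, y, hx, hy, hP⟩ := hncond
      rcases eq_or_ne x y with rfl | hxy
      · obtain ⟨Q, hQ⟩ := hP SimpleGraph.Walk.nil (by simp)
        have : walkWeight w (SimpleGraph.Walk.nil : G.Walk x x) = 0 := by
          simp [walkWeight]
        rw [this] at hQ
        exact absurd hQ (not_lt.mpr (walkWeight_nonneg hw Q))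
      · -- rotate the cycle to start at x
        set W' := W.rotate x hx with hW'def
        have hW' : W'.IsCycle := hW.rotate hx
        have hrot := W.rotate_edges x hx
        have hchainW' : walkChain G W' = c₀ := by
          rw [← hcase]
          funext e
          unfold walkChain
          rw [if_congr hrot.perm.mem_iff rfl rfl]
        have htail : ∀ z, z ∈ W.support → z ∈ W.support.tail := by
          intro z hz
          obtain ⟨u', hadj, q, hq⟩ := SimpleGraph.Walk.not_nil_iff.mp hW.not_nil
          rw [hq, SimpleGraph.Walk.support_cons, List.tail_cons]
          rw [hq, SimpleGraph.Walk.support_cons, List.mem_cons] at hz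
          rcases hz with rfl | hz
          · exact q.end_mem_support
          · exact hz
        have hy' : y ∈ W'.support := by
          have h1 : y ∈ W.support.tail := htail y hy
          have h2 := SimpleGraph.Walk.support_rotate W x hx
          exact List.mem_of_mem_tail (h2.mem_iff.mpr h1)
        set A1 := W'.takeUntil y hy' with hA1def
        set A2 := W'.dropUntil y hy' with hA2def
        have hspec : A1.append A2 = W' := W'.take_spec hy'
        have htr : W'.IsTrail := hW'.isCircuit.isTrail
        have hedges : W'.edges = A1.edges ++ A2.edges := by
          rw [← hspec, SimpleGraph.Walk.edges_append]
        have hnodup := htr.edges_nodup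
        rw [hedges] at hnodup
        obtain ⟨hn1, hn2, hdisj⟩ := List.nodup_append.mp hnodup
        have hA1tr : A1.IsTrail := htr.takeUntil hy'
        have hA2tr : A2.IsTrail := htr.dropUntil hy'
        have hA1sub : ∀ e ∈ A1.edges, e ∈ W.edges := by
          intro e he
          exact hrot.perm.mem_iff.mp (hedges ▸ List.mem_append_left _ he)
        have hA2sub : ∀ e ∈ A2.edges, e ∈ W.edges := by
          intro e he
          exact hrot.perm.mem_iff.mp (hedges ▸ List.mem_append_right _ he)
        have hmemW' : ∀ e : G.edgeSet, ((e : Sym2 V) ∈ W'.edges) ↔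
            ((e : Sym2 V) ∈ A1.edges ∨ (e : Sym2 V) ∈ A2.edges) := by
          intro e
          rw [hedges, List.mem_append]
        have hsplitchain : walkChain G A1 + walkChain G A2 = c₀ := by
          rw [← hchainW']
          funext e
          simp only [Pi.add_apply]
          unfold walkChain
          rw [if_congr (hmemW' e) rfl rfl]
          by_cases h1 : (e : Sym2 V) ∈ A1.edges
          · have h2 : (e : Sym2 V) ∉ A2.edges := fun h2 => hdisj _ h1 _ h2 rfl
            simp [h1, h2]
          · by_cases h2 : (e : Sym2 V) ∈ A2.edges <;> simp [h1, h2]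
        have hwgt : walkWeight w A1 + walkWeight w A2 = cycleWeight G w c₀ := by
          rw [← hchainW', cycleWeight_walkChain_trail htr]
          unfold walkWeight
          rw [hedges, List.map_append, List.sum_append]
        obtain ⟨Q1, hQ1⟩ := hP A1 hA1sub
        obtain ⟨Q2, hQ2⟩ := hP A2.reverse (by
          intro e he
          rw [SimpleGraph.Walk.edges_reverse, List.mem_reverse] at he
          exact hA2sub e he)
        rw [walkWeight_reverse] at hQ2
        obtain ⟨P, hPpath, hPmin⟩ := exists_shortest_path hG w hw x y
        have hPA1 : walkWeight w P < walkWeight w A1 := lt_of_le_of_lt (hPmin Q1) hQ1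
        have hPA2 : walkWeight w P < walkWeight w A2 := lt_of_le_of_lt (hPmin Q2) hQ2
        set C1 := walkChain G A1 + walkChain G P with hC1def
        set C2 := walkChain G A2 + walkChain G P with hC2def
        have hC1cs : C1 ∈ cycleSpace G := by
          rw [cycleSpace, LinearMap.mem_ker, hC1def, map_add,
            boundary_trail A1 hA1tr, boundary_trail P hPpath.isTrail]
          funext v
          simp only [Pi.add_apply, Pi.zero_apply]
          exact zmod2_aa _ _
        have hC2cs : C2 ∈ cycleSpace G := by
          rw [cycleSpace, LinearMap.mem_ker, hC2def, map_add,
            boundary_trail A2 hA2tr, boundary_trail P hPpath.isTrail]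
          funext v
          simp only [Pi.add_apply, Pi.zero_apply]
          exact zmod2_ab _ _
        have hsum : C1 + C2 = c₀ := by
          rw [hC1def, hC2def, ← hsplitchain]
          funext e
          simp only [Pi.add_apply]
          exact zmod2_cancel _ _ _
        have hwc₀ : cycleWeight G w c₀ = walkWeight w A1 + walkWeight w A2 := hwgt.symm
        have hwC1 : cycleWeight G w C1 < cycleWeight G w c₀ := by
          calc cycleWeight G w C1 ≤ cycleWeight G w (walkChain G A1)
                + cycleWeight G w (walkChain G P) := cycleWeight_add_le hw _ _
            _ = walkWeight w A1 + walkWeight w P := by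
                rw [cycleWeight_walkChain_trail hA1tr, cycleWeight_walkChain_trail hPpath.isTrail]
            _ < walkWeight w A1 + walkWeight w A2 := by linarith
            _ = cycleWeight G w c₀ := hwgt
        have hwC2 : cycleWeight G w C2 < cycleWeight G w c₀ := by
          calc cycleWeight G w C2 ≤ cycleWeight G w (walkChain G A2)
                + cycleWeight G w (walkChain G P) := cycleWeight_add_le hw _ _
            _ = walkWeight w A2 + walkWeight w P := by
                rw [cycleWeight_walkChain_trail hA2tr, cycleWeight_walkChain_trail hPpath.isTrail]
            _ < walkWeight w A1 + walkWeight w A2 := by linarith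
            _ = cycleWeight G w c₀ := hwgt
        have hC1Sp : C1 ∈ Sp := hsmall C1 hC1cs (by
          rw [hμ]
          exact Prod.Lex.lt_iff.mpr (Or.inl hwC1))
        have hC2Sp : C2 ∈ Sp := hsmall C2 hC2cs (by
          rw [hμ]
          exact Prod.Lex.lt_iff.mpr (Or.inl hwC2))
        exact hc₀S (hsum ▸ Submodule.add_mem _ hC1Sp hC2Sp)
    · -- the elementary cycle is a proper part of c₀
      set c' := walkChain G W with hc'def
      have hc's : ∀ e, c' e = 1 → c₀ e = 1 := hsupp
      have hd2 : ∀ e, (c₀ + c') e = 1 → c₀ e = 1 := by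
        intro e he
        rcases zmod2_01 (c₀ e) with h0 | h1
        · exfalso
          rcases zmod2_01 (c' e) with h0' | h1'
          · rw [Pi.add_apply, h0, h0'] at he
            exact absurd he (by decide)
          · have hce := hsupp e h1'
            rw [h0] at hce
            exact absurd hce (by decide)
        · exact h1
      have hc'cs : c' ∈ cycleSpace G := hWcs
      have hd2cs : c₀ + c' ∈ cycleSpace G := Submodule.add_mem _ hc₀ hc'cs
      have hd2ne : c₀ + c' ≠ c₀ := by
        intro h
        apply hWne
        funext e
        have hh := congrFun h e
        simp only [Pi.add_apply] at hh
        show c' e = 0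
        exact add_eq_left.mp hh
      have hwle1 : cycleWeight G w c' ≤ cycleWeight G w c₀ := cycleWeight_mono hw hsupp
      have hwle2 : cycleWeight G w (c₀ + c') ≤ cycleWeight G w c₀ := cycleWeight_mono hw hd2
      have hcard1 := hext c' c₀ hsupp hcase
      have hcard2 := hext (c₀ + c') c₀ hd2 hd2ne
      have hμ1 : μ c' < μ c₀ := by
        rw [hμ]
        apply Prod.Lex.lt_iff.mpr
        rcases lt_or_eq_of_le hwle1 with h | h
        · exact Or.inl h
        · exact Or.inr ⟨h, hcard1⟩
      have hμ2 : μ (c₀ + c') < μ c₀ := by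
        rw [hμ]
        apply Prod.Lex.lt_iff.mpr
        rcases lt_or_eq_of_le hwle2 with h | h
        · exact Or.inl h
        · exact Or.inr ⟨h, hcard2⟩
      have hSp1 : c' ∈ Sp := hsmall c' hc'cs hμ1
      have hSp2 : c₀ + c' ∈ Sp := hsmall _ hd2cs hμ2
      have hfin : c' + (c₀ + c') = c₀ := by
        funext e
        simp only [Pi.add_apply]
        exact zmod2_bab _ _
      exact hc₀S (hfin ▸ Submodule.add_mem _ hSp1 hSp2)


/-- The tight cycles of a connected graph with non-negative edge weights span the cycle
space; in particular, the matrix whose columns are the incidence vectors of the tight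
cycles has rank `ν`, the dimension of the cycle space. -/
theorem tight_cycles_span (G : SimpleGraph V) (hG : G.Connected)
    (w : Sym2 V → ℝ) (hw : ∀ e, 0 ≤ w e) :
    Submodule.span (ZMod 2) {c : G.edgeSet → ZMod 2 | IsTight G w c} = cycleSpace G ∧
    (Matrix.of fun (e : G.edgeSet) (c : {c : G.edgeSet → ZMod 2 // IsTight G w c}) =>
        (c : G.edgeSet → ZMod 2) e).rank
      = Module.finrank (ZMod 2) (cycleSpace G) := by
  have hspan := span_tight_eq hG w hw
  refine ⟨hspan, ?_⟩
  rw [Matrix.rank_eq_finrank_span_cols]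
  have htrans : Matrix.transpose (Matrix.of fun (e : G.edgeSet)
      (c : {c : G.edgeSet → ZMod 2 // IsTight G w c}) => (c : G.edgeSet → ZMod 2) e)
      = fun c : {c : G.edgeSet → ZMod 2 // IsTight G w c} => (c : G.edgeSet → ZMod 2) := by
    ext c e
    rfl
  rw [Matrix.col, htrans, Subtype.range_coe_subtype, hspan]

end PaperMCB
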